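/- Suppose h is a polynomial in two real variables with all nonnegative coefficients, h is not constant, and h(x, 1-x) = 1 for all x. Then h(1,1) > 1. -/
import Mathlib


open MvPolynomial in
/-- A nonconstant polynomial with nonnegative coefficients that equals `1`
on the line `x + y = 1` has coefficient sum `h(1,1)` strictly greater than `1`. -/
theorem coefficient_sum_gt_one (h : MvPolynomial (Fin 2) ℝ)
    (hnn : ∀ m, 0 ≤ h.coeff m)
    (hnc : h.totalDegree ≠ 0)
    (hline : ∀ x : ℝ, MvPolynomial.eval ![x, 1 - x] h = 1) :
    1 < MvPolynomial.eval ![(1 : ℝ), 1] h := by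
  -- witness monomial of positive degree
  obtain ⟨d, hd, hdpos⟩ : ∃ d ∈ h.support, (d.sum fun _ e => e) ≠ 0 := by
    by_contra hc
    push_neg at hc
    apply hnc
    rw [MvPolynomial.totalDegree]
    exact (Finset.sup_eq_bot_iff _ _).2 hc
  have h2 := hline (1/2)
  have heq : ![(1:ℝ)/2, 1 - 1/2] = fun _ : Fin 2 => (1/2 : ℝ) := by
    funext i; fin_cases i <;> norm_num
  rw [heq] at h2
  rw [MvPolynomial.eval_eq'] at h2 ⊢
  conv_lhs => rw [← h2]
  apply Finset.sum_lt_sum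
  · intro m hm
    have h1 : ∏ i, (![(1:ℝ), 1] i) ^ m i = 1 := by
      apply Finset.prod_eq_one
      intro i _
      fin_cases i <;> simp
    rw [h1, mul_one]
    calc h.coeff m * ∏ i, ((1:ℝ)/2) ^ m i
        ≤ h.coeff m * 1 := by
          apply mul_le_mul_of_nonneg_left _ (hnn m)
          apply Finset.prod_le_one
          · intro i _; positivity
          · intro i _; apply pow_le_one₀ <;> norm_num
      _ = h.coeff m := mul_one _
  · refine ⟨d, hd, ?_⟩
    have h1 : ∏ i, (![(1:ℝ), 1] i) ^ d i = 1 := by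
      apply Finset.prod_eq_one
      intro i _
      fin_cases i <;> simp
    rw [h1, mul_one]
    have hcpos : 0 < h.coeff d := lt_of_le_of_ne (hnn d) (Ne.symm (MvPolynomial.mem_support_iff.1 hd))
    have hprod : ∏ i, ((1:ℝ)/2) ^ d i < 1 := by
      have : ∃ i ∈ (Finset.univ : Finset (Fin 2)), d i ≠ 0 := by
        by_contra hc
        push_neg at hc
        apply hdpos
        rw [Finsupp.sum]
        exact Finset.sum_eq_zero fun i _ => hc i (Finset.mem_univ i)
      obtain ⟨j, _, hj⟩ := this
      have hd01 : d 0 + d 1 ≠ 0 := by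
        intro hz
        apply hdpos
        have h0 : d 0 = 0 := by omega
        have h1' : d 1 = 0 := by omega
        have : d = 0 := by
          ext i; fin_cases i <;> simpa
        simp [this]
      calc ∏ i, ((1:ℝ)/2) ^ d i = ((1:ℝ)/2) ^ (d 0 + d 1) := by
            rw [Fin.prod_univ_two, pow_add]
          _ < 1 := pow_lt_one₀ (by norm_num) (by norm_num) hd01
    calc h.coeff d * ∏ i, ((1:ℝ)/2) ^ d i < h.coeff d * 1 := by
          exact mul_lt_mul_of_pos_left hprod hcpos
      _ = h.coeff d := mul_one _
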